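/- (Existence theorem.) The system σ is consistent (A ≠ ∅) if and only if (0_{X*}, −1) ∉ w*-cl cone(epi δ_C* ∪ ⋃_{i∈I} epi f_i*), and this holds if and only if (0_{X*}, −1) ∉ w*-cl cone(⋃_{i∈I} gph f_i* ∪ gph δ_C*), where gph h = {(x*, h(x*)) : x* ∈ X*, h(x*) ∈ ℝ}. -/

import Mathlib

open Pointwise

noncomputable section

variable {X : Type*} [AddCommGroup X] [Module ℝ X] [TopologicalSpace X]

/-- Fenchel conjugate, as a function on the weak-* dual. -/
def conjFn (h : X → EReal) : WeakDual ℝ X → EReal :=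
  fun p => ⨆ x : X, (p x : EReal) - h x

/-- Epigraph of an extended-real-valued function. -/
def epiFn {V : Type*} (h : V → EReal) : Set (V × ℝ) :=
  {q | h q.1 ≤ (q.2 : EReal)}

/-- Graph of an extended-real-valued function (where it is finite). -/
def gphFn {V : Type*} (h : V → EReal) : Set (V × ℝ) :=
  {q | h q.1 = (q.2 : EReal)}

/-- Effective domain. -/
def domFn {V : Type*} (h : V → EReal) : Set V :=
  {x | h x < ⊤}

open Classical in
/-- Indicator function of a set. -/
def indicatorE {V : Type*} (D : Set V) : V → EReal :=
  fun x => if x ∈ D then (0 : EReal) else ⊤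

/-- Convex cone generated by `D ∪ {0}`. -/
def coneGen {V : Type*} [AddCommGroup V] [Module ℝ V] (D : Set V) : Set V :=
  {0} ∪ {y | ∃ t : ℝ, 0 ≤ t ∧ ∃ x ∈ convexHull ℝ D, y = t • x}

/-- `h ∈ Γ(X)`: proper, convex and lower semicontinuous. -/
def InGamma (h : X → EReal) : Prop :=
  (∀ x, h x ≠ ⊥) ∧ (∃ x, h x ≠ ⊤) ∧
    Convex ℝ {q : X × ℝ | h q.1 ≤ (q.2 : EReal)} ∧ LowerSemicontinuous h

/-- Solution set `A` of the system `σ = {f i x ≤ 0, i ∈ I; x ∈ C}`. -/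
def solSet {I : Type*} (C : Set X) (f : I → X → EReal) : Set X :=
  {x | x ∈ C ∧ ∀ i, f i x ≤ (0 : EReal)}

/-- Characteristic cone `K = cone (epi δ_C* ∪ ⋃ i, epi f_i*)` of the system. -/
def charCone {I : Type*} (C : Set X) (f : I → X → EReal) : Set (WeakDual ℝ X × ℝ) :=
  coneGen (epiFn (conjFn (indicatorE C)) ∪ ⋃ i, epiFn (conjFn (f i)))

/-- Barrier cone `barr C = dom δ_C*`. -/
def barCone (C : Set X) : Set (WeakDual ℝ X) :=
  domFn (conjFn (indicatorE C))

/-- The Farkas–Minkowski constraint qualification. -/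
def IsFM {I : Type*} (C : Set X) (f : I → X → EReal) : Prop :=
  (solSet C f).Nonempty ∧ IsClosed (charCone C f)

/-- Recession function `h^∞ = δ*_{dom h*}`. -/
def recFn (h : X → EReal) : X → EReal :=
  fun x => ⨆ q ∈ domFn (conjFn h), ((q x : ℝ) : EReal)

/-- Recession cone `D^∞ = ⋂_{t>0} t (D - a)`, for any `a ∈ D`. -/
def recCone (D : Set X) : Set X :=
  {d | ∀ a ∈ D, ∀ t : ℝ, 0 < t → d ∈ t • (D - ({a} : Set X))}

/-- Subdifferential of `h` at `a`. -/
def subdiff (h : X → EReal) (a : X) : Set (WeakDual ℝ X) :=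
  {p | (∃ r : ℝ, h a = (r : EReal)) ∧ ∀ x, h a + ((p (x - a) : ℝ) : EReal) ≤ h x}


/-! ### Auxiliary lemmas -/

section AuxCone
variable {V : Type*} [AddCommGroup V] [Module ℝ V]

lemma zero_mem_coneGen (D : Set V) : (0:V) ∈ coneGen D := Or.inl rfl

lemma coneGen_smul_mem {D : Set V} {t : ℝ} (ht : 0 ≤ t) {y : V} (hy : y ∈ coneGen D) :
    t • y ∈ coneGen D := by
  rcases hy with h | ⟨s, hs, x, hx, rfl⟩
  · rw [Set.mem_singleton_iff] at h; subst h
    exact Or.inl (by simp)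
  · exact Or.inr ⟨t * s, mul_nonneg ht hs, x, hx, smul_smul t s x⟩

lemma coneGen_convex (D : Set V) : Convex ℝ (coneGen D) := by
  rintro y1 hy1 y2 hy2 a b ha hb hab
  rcases hy1 with h1 | ⟨t1, ht1, x1, hx1, rfl⟩
  · rw [Set.mem_singleton_iff] at h1; subst h1
    rw [smul_zero, zero_add]
    exact coneGen_smul_mem hb hy2
  rcases hy2 with h2 | ⟨t2, ht2, x2, hx2, rfl⟩
  · rw [Set.mem_singleton_iff] at h2; subst h2
    rw [smul_zero, add_zero]
    exact coneGen_smul_mem ha (Or.inr ⟨t1, ht1, x1, hx1, rfl⟩)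
  · rcases eq_or_lt_of_le (by positivity : (0:ℝ) ≤ a * t1 + b * t2) with hs0 | hs0
    · have h1 : a * t1 = 0 ∧ b * t2 = 0 := by
        constructor <;> nlinarith [mul_nonneg ha ht1, mul_nonneg hb ht2]
      have he : a • t1 • x1 + b • t2 • x2 = 0 := by
        rw [smul_smul, smul_smul, h1.1, h1.2, zero_smul, zero_smul, add_zero]
      rw [he]; exact Or.inl rfl
    · set s := a * t1 + b * t2 with hs
      refine Or.inr ⟨s, le_of_lt hs0, (a*t1/s) • x1 + (b*t2/s) • x2, ?_, ?_⟩
      · apply (convex_convexHull ℝ D) hx1 hx2 (by positivity) (by positivity)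
        field_simp
        exact hs.symm
      · simp only [smul_add, smul_smul]
        congr 2 <;> field_simp

lemma coneGen_mono {D D' : Set V} (h : D ⊆ D') : coneGen D ⊆ coneGen D' := by
  rintro y (h0 | ⟨t, ht, x, hx, rfl⟩)
  · exact Or.inl h0
  · exact Or.inr ⟨t, ht, x, convexHull_mono h hx, rfl⟩

lemma coneGen_subset_of {W D : Set V} (hW : Convex ℝ W)
    (hsmul : ∀ t : ℝ, 0 ≤ t → ∀ x ∈ W, t • x ∈ W) (h0 : (0:V) ∈ W) (hD : D ⊆ W) :
    coneGen D ⊆ W := by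
  rintro y (hy | ⟨t, ht, x, hx, rfl⟩)
  · rw [Set.mem_singleton_iff] at hy; subst hy; exact h0
  · exact hsmul t ht x (convexHull_min hD hW hx)

end AuxCone

instance : LocallyConvexSpace ℝ (WeakDual ℝ X) :=
  WeakBilin.locallyConvexSpace (B := topDualPairing ℝ X)

/-- Evaluation as a linear map into the algebraic dual of the weak dual. -/
def evalWD : X →ₗ[ℝ] (WeakDual ℝ X →ₗ[ℝ] ℝ) where
  toFun a := { toFun := fun p => p a, map_add' := fun p q => rfl, map_smul' := fun c p => rfl }
  map_add' a b := by ext p; exact map_add p a b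
  map_smul' c a := by ext p; exact map_smul p c a

/-- Every continuous linear functional on the weak-* dual is evaluation at a point. -/
lemma exists_eval (φ : WeakDual ℝ X →L[ℝ] ℝ) :
    ∃ a : X, ∀ p : WeakDual ℝ X, φ p = p a := by
  have hind : Topology.IsInducing (fun (p : WeakDual ℝ X) (x : X) => p x) := ⟨rfl⟩
  have hU : φ ⁻¹' Set.Ioo (-1:ℝ) 1 ∈ nhds (0 : WeakDual ℝ X) := by
    apply φ.continuous.continuousAt.preimage_mem_nhds
    rw [map_zero]
    exact Ioo_mem_nhds (by norm_num) (by norm_num)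
  rw [hind.nhds_eq_comap _, Filter.mem_comap] at hU
  obtain ⟨W, hW, hWsub⟩ := hU
  have hW' : W ∈ nhds (fun _ : X => (0:ℝ)) := hW
  rw [nhds_pi, Filter.mem_pi] at hW'
  obtain ⟨I, Ifin, t, ht, hIsub⟩ := hW'
  have hker : ∀ p : WeakDual ℝ X, (∀ x ∈ I, p x = 0) → φ p = 0 := by
    intro p hp
    by_contra hφ
    have hmem : ∀ c : ℝ, c • p ∈ φ ⁻¹' Set.Ioo (-1:ℝ) 1 := by
      intro c
      apply hWsub
      apply hIsub
      intro x hx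
      have hz : (c • p) x = 0 := by
        show c * p x = 0
        rw [hp x hx, mul_zero]
      show (fun (p : WeakDual ℝ X) (x : X) => p x) (c • p) x ∈ t x
      simp only [hz]
      exact mem_of_mem_nhds (ht x)
    have h2 := (hmem (2 / φ p)).2
    rw [map_smul, smul_eq_mul, div_mul_cancel₀ _ hφ] at h2
    norm_num at h2
  haveI : Finite I := Ifin.to_subtype
  have hker' : (⨅ i : I, LinearMap.ker (evalWD (i : X))) ≤
      LinearMap.ker (φ : WeakDual ℝ X →ₗ[ℝ] ℝ) := by
    intro p hp
    rw [Submodule.mem_iInf] at hp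
    exact LinearMap.mem_ker.2 (hker p fun x hx => hp ⟨x, hx⟩)
  have hspan := mem_span_of_iInf_ker_le_ker hker'
  have hrange : Set.range (fun i : I => evalWD (i : X)) = evalWD '' I := by
    rw [show (fun i : I => evalWD (i : X)) = evalWD ∘ (Subtype.val) from rfl, Set.range_comp,
      Subtype.range_val]
  rw [hrange, ← Submodule.map_span] at hspan
  obtain ⟨a, _, ha⟩ := hspan
  refine ⟨a, fun p => ?_⟩
  have h3 : evalWD a p = (φ : WeakDual ℝ X →ₗ[ℝ] ℝ) p := by rw [ha]
  exact h3.symm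

lemma prod_decomp {V : Type*} [AddCommGroup V] [Module ℝ V] [TopologicalSpace V]
    (L : (V × ℝ) →L[ℝ] ℝ) (q : V × ℝ) : L q = L (q.1, 0) + q.2 * L (0, 1) := by
  have h : q = (q.1, (0:ℝ)) + q.2 • ((0:V), (1:ℝ)) := by
    rw [Prod.smul_mk, smul_zero, smul_eq_mul, mul_one, Prod.mk_add_mk, add_zero, zero_add]
  conv_lhs => rw [h]
  rw [map_add, map_smul, smul_eq_mul]

lemma cone_separation {V : Type*} [AddCommGroup V] [Module ℝ V] [TopologicalSpace V]
    [IsTopologicalAddGroup V] [ContinuousSMul ℝ V] [LocallyConvexSpace ℝ V]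
    {D : Set V} {z : V} (hz : z ∉ closure (coneGen D)) :
    ∃ L : V →L[ℝ] ℝ, 0 < L z ∧ ∀ y ∈ D, L y ≤ 0 := by
  obtain ⟨L, u, hLa, hLz⟩ :=
    geometric_hahn_banach_closed_point (coneGen_convex D).closure isClosed_closure hz
  have hu : 0 < u := by
    have h0 := hLa 0 (subset_closure (zero_mem_coneGen D))
    rwa [map_zero] at h0
  refine ⟨L, hu.trans hLz, fun y hy => ?_⟩
  by_contra hcon
  push_neg at hcon
  have hty : ∀ t : ℝ, 0 ≤ t → L (t • y) < u := by
    intro t ht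
    exact hLa _ (subset_closure (Or.inr ⟨t, ht, y, subset_convexHull ℝ D hy, rfl⟩))
  have h2 := hty ((u + 1) / L y) (by positivity)
  rw [map_smul, smul_eq_mul, div_mul_cancel₀ _ (ne_of_gt hcon)] at h2
  linarith

/-- View a continuous linear functional as an element of the weak-* dual. -/
def toWeakDual (g : X →L[ℝ] ℝ) : WeakDual ℝ X := g

lemma isClosed_epi (f : X → EReal) (h : LowerSemicontinuous f) :
    IsClosed {q : X × ℝ | f q.1 ≤ (q.2 : EReal)} := by
  have h1 : IsClosed {p : X × EReal | f p.1 ≤ p.2} := h.isClosed_epigraph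
  have h2 : Continuous fun q : X × ℝ => (q.1, (q.2 : EReal)) :=
    continuous_fst.prodMk (continuous_coe_real_ereal.comp continuous_snd)
  exact h1.preimage h2

lemma conj_real (f : X → EReal) {x0 : X} {s0 : ℝ} (hx0 : f x0 = (s0 : EReal))
    (hbot : ∀ x, f x ≠ ⊥) (p : WeakDual ℝ X) (M : ℝ)
    (hb : ∀ (x : X) (s : ℝ), f x = (s : EReal) → p x - s ≤ M) :
    ∃ r : ℝ, conjFn f p = (r : EReal) ∧ r ≤ M := by
  have hub : conjFn f p ≤ (M : EReal) := by
    refine iSup_le fun x => ?_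
    rcases eq_or_ne (f x) ⊤ with h | h
    · rw [h, EReal.sub_top]; exact bot_le
    · obtain ⟨s, hs⟩ : ∃ s : ℝ, f x = (s : EReal) :=
        ⟨(f x).toReal, (EReal.coe_toReal h (hbot x)).symm⟩
      rw [hs, ← EReal.coe_sub]
      exact EReal.coe_le_coe_iff.2 (hb x s hs)
  have hlb : ((p x0 - s0 : ℝ) : EReal) ≤ conjFn f p := by
    have h1 : (p x0 : EReal) - f x0 ≤ conjFn f p := le_iSup (fun x => (p x : EReal) - f x) x0
    rwa [hx0, ← EReal.coe_sub] at h1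
  have hnetop : conjFn f p ≠ ⊤ := fun h => by rw [h] at hub; exact absurd hub (by simp)
  have hnebot : conjFn f p ≠ ⊥ := fun h => by
    rw [h, le_bot_iff] at hlb; exact EReal.coe_ne_bot _ hlb
  refine ⟨(conjFn f p).toReal, (EReal.coe_toReal hnetop hnebot).symm, ?_⟩
  exact EReal.coe_le_coe_iff.1 (by rwa [EReal.coe_toReal hnetop hnebot])

lemma epi_sep [IsTopologicalAddGroup X] [ContinuousSMul ℝ X] [LocallyConvexSpace ℝ X]
    {f : X → EReal} (hconv : Convex ℝ {q : X × ℝ | f q.1 ≤ (q.2 : EReal)})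
    (hcl : IsClosed {q : X × ℝ | f q.1 ≤ (q.2 : EReal)})
    {x0 : X} {s0 : ℝ} (hx0 : f x0 = (s0 : EReal))
    {b : X} {rho : ℝ} (hb : ¬ f b ≤ ((rho : ℝ) : EReal)) :
    ∃ (g : X →L[ℝ] ℝ) (c u : ℝ), c ≤ 0 ∧
      (∀ (x : X) (s : ℝ), f x ≤ (s : EReal) → g x + c * s < u) ∧ u < g b + c * rho := by
  obtain ⟨L, u, hL1, hL2⟩ :=
    geometric_hahn_banach_closed_point (x := ((b, rho) : X × ℝ)) hconv hcl hb
  set g := L.comp (ContinuousLinearMap.inl ℝ X ℝ) with hg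
  set c := L ((0 : X), (1 : ℝ)) with hc
  have hdec : ∀ q : X × ℝ, L q = g q.1 + q.2 * c := by
    intro q
    have h1 := prod_decomp L q
    rwa [show L (q.1, 0) = g q.1 from rfl] at h1
  have hpt : ∀ (x : X) (s : ℝ), f x ≤ (s : EReal) → g x + c * s < u := by
    intro x s hxs
    have h1 := hL1 (x, s) hxs
    rw [hdec (x, s)] at h1
    simpa [mul_comm] using h1
  have hcle : c ≤ 0 := by
    by_contra hcpos
    push_neg at hcpos
    obtain ⟨n, hn⟩ := exists_nat_gt ((u - g x0 - c * s0) / c)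
    have hs : f x0 ≤ ((s0 + (n : ℝ) : ℝ) : EReal) := by
      rw [hx0]
      exact EReal.coe_le_coe_iff.2 (le_add_of_nonneg_right (Nat.cast_nonneg n))
    have h1 := hpt x0 (s0 + n) hs
    have h2 : u - g x0 - c * s0 < n * c := (div_lt_iff₀ hcpos).1 hn
    nlinarith
  have h2 := hL2
  rw [hdec (b, rho)] at h2
  exact ⟨g, c, u, hcle, hpt, by simpa [mul_comm] using h2⟩

lemma scaled_bound {f : X → EReal} (g : X →L[ℝ] ℝ) {c u : ℝ} (hc : c < 0)
    (hpt : ∀ (x : X) (s : ℝ), f x ≤ (s : EReal) → g x + c * s < u) :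
    ∀ (x : X) (s : ℝ), f x = (s : EReal) → (-c)⁻¹ * g x - s ≤ u / (-c) := by
  intro x s hxs
  have h1 := hpt x s (le_of_eq hxs)
  have hcpos : (0 : ℝ) < -c := by linarith
  have h3 := mul_le_mul_of_nonneg_left h1.le (inv_pos.2 hcpos).le
  have hcne : (-c) ≠ 0 := by linarith
  have h4b : (-c)⁻¹ * c = -1 := by field_simp; rw [div_self (by linarith : c ≠ 0)]
  have h4 : (-c)⁻¹ * (g x + c * s) = (-c)⁻¹ * g x + ((-c)⁻¹ * c) * s := by ring
  rw [h4b] at h4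
  have h5 : u / (-c) = (-c)⁻¹ * u := div_eq_inv_mul u (-c)
  linarith

/-- The key Fenchel–Moreau-type lemma. -/
lemma key_FM [IsTopologicalAddGroup X] [ContinuousSMul ℝ X] [LocallyConvexSpace ℝ X]
    {f : X → EReal} (hf : InGamma f) (a : X)
    (H : ∀ (p : WeakDual ℝ X) (r : ℝ), conjFn f p = (r : EReal) → p a ≤ r) :
    f a ≤ 0 := by
  obtain ⟨hbot, ⟨x0, hx0t⟩, hconv, hlsc⟩ := hf
  obtain ⟨s0, hx0⟩ : ∃ s0 : ℝ, f x0 = (s0 : EReal) :=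
    ⟨(f x0).toReal, (EReal.coe_toReal hx0t (hbot x0)).symm⟩
  have hcl := isClosed_epi f hlsc
  have hA : ¬ f x0 ≤ (((s0 - 1 : ℝ)) : EReal) := by
    rw [hx0]
    exact fun h => absurd (EReal.coe_le_coe_iff.1 h) (by linarith)
  obtain ⟨g0, c0, u0, hc0le, hpt0, hb0⟩ := epi_sep hconv hcl hx0 hA
  have hc0 : c0 < 0 := by
    rcases lt_or_eq_of_le hc0le with h | h
    · exact h
    · exfalso
      have h1 := hpt0 x0 s0 (le_of_eq hx0)
      rw [h] at hb0 h1
      simp only [zero_mul, add_zero] at hb0 h1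
      linarith
  set p0 : WeakDual ℝ X := toWeakDual ((-c0)⁻¹ • g0) with hp0def
  have hp0 : ∀ x : X, p0 x = (-c0)⁻¹ * g0 x := fun x => rfl
  have hbd0 : ∀ (x : X) (s : ℝ), f x = (s : EReal) → p0 x - s ≤ u0 / (-c0) := by
    intro x s hxs
    rw [hp0]
    exact scaled_bound g0 hc0 hpt0 x s hxs
  by_contra hfa
  have hB : ¬ f a ≤ (((0 : ℝ)) : EReal) := by rwa [EReal.coe_zero]
  obtain ⟨g, c, u, hcle, hpt, hbineq⟩ := epi_sep hconv hcl hx0 hB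
  have hga : u < g a := by
    rw [mul_zero, add_zero] at hbineq
    exact hbineq
  rcases lt_or_eq_of_le hcle with hc | hc
  · set p : WeakDual ℝ X := toWeakDual ((-c)⁻¹ • g) with hpdef
    have hp : ∀ x : X, p x = (-c)⁻¹ * g x := fun x => rfl
    obtain ⟨r, hr, hrle⟩ := conj_real f hx0 hbot p (u / (-c))
      (fun x s hxs => by rw [hp]; exact scaled_bound g hc hpt x s hxs)
    have hHa := H p r hr
    rw [hp] at hHa
    have hcpos : (0 : ℝ) < -c := by linarith
    have h6 : u * (-c)⁻¹ < g a * (-c)⁻¹ := mul_lt_mul_of_pos_right hga (inv_pos.2 hcpos)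
    have h7 : u / (-c) = u * (-c)⁻¹ := div_eq_mul_inv u (-c)
    nlinarith
  · have hptu : ∀ (x : X) (s : ℝ), f x = (s : EReal) → g x < u := by
      intro x s hxs
      have h1 := hpt x s (le_of_eq hxs)
      rw [hc] at h1
      simpa using h1
    set u0' := u0 / (-c0) with hu0'
    set t : ℝ := max 1 ((u0' - p0 a + 1) / (g a - u)) with ht
    have htpos : (0 : ℝ) < t := lt_of_lt_of_le one_pos (le_max_left _ _)
    set pt : WeakDual ℝ X := toWeakDual ((-c0)⁻¹ • g0 + t • g) with hptdef
    have hptx : ∀ x : X, pt x = p0 x + t * g x := fun x => rfl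
    have hbdt : ∀ (x : X) (s : ℝ), f x = (s : EReal) → pt x - s ≤ u0' + t * u := by
      intro x s hxs
      have h1 := hbd0 x s hxs
      have h2 := hptu x s hxs
      rw [hptx]
      nlinarith
    obtain ⟨rt, hrt, hrtle⟩ := conj_real f hx0 hbot pt (u0' + t * u) hbdt
    have hHt := H pt rt hrt
    rw [hptx a] at hHt
    have hgau : (0 : ℝ) < g a - u := by linarith
    have h7 : u0' - p0 a + 1 ≤ t * (g a - u) := by
      calc u0' - p0 a + 1 = ((u0' - p0 a + 1) / (g a - u)) * (g a - u) :=
            (div_mul_cancel₀ _ hgau.ne').symm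
        _ ≤ t * (g a - u) := mul_le_mul_of_nonneg_right (le_max_right _ _) hgau.le
    nlinarith

lemma indicator_InGamma {C : Set X} (hCne : C.Nonempty) (hCcl : IsClosed C)
    (hCcv : Convex ℝ C) : InGamma (indicatorE C) := by
  refine ⟨fun x => ?_, ?_, ?_, ?_⟩
  · unfold indicatorE; split <;> simp
  · obtain ⟨x, hx⟩ := hCne
    exact ⟨x, by simp [indicatorE, hx]⟩
  · have he : {q : X × ℝ | indicatorE C q.1 ≤ (q.2 : EReal)} = C ×ˢ Set.Ici (0 : ℝ) := by
      ext q
      simp only [indicatorE, Set.mem_setOf_eq, Set.mem_prod, Set.mem_Ici]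
      split_ifs with h
      · constructor
        · intro h2
          refine ⟨h, ?_⟩
          exact_mod_cast h2
        · intro h2
          exact_mod_cast h2.2
      · constructor
        · intro h2
          exact absurd h2 (by simp)
        · intro h2
          exact absurd h2.1 h
    rw [he]
    exact hCcv.prod (convex_Ici 0)
  · intro x y hy
    by_cases hx : x ∈ C
    · have hx' : indicatorE C x = 0 := if_pos hx
      rw [hx'] at hy
      refine Filter.Eventually.of_forall fun z => lt_of_lt_of_le hy ?_
      unfold indicatorE; split
      · exact le_refl _
      · exact le_top
    · have hx' : indicatorE C x = ⊤ := if_neg hx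
      rw [hx'] at hy
      filter_upwards [hCcl.isOpen_compl.mem_nhds hx] with z hz
      have hz' : indicatorE C z = ⊤ := if_neg hz
      rw [hz']
      exact hy

lemma easy_dir {I : Type*} (C : Set X) (f : I → X → EReal) (hfbot : ∀ i x, f i x ≠ ⊥)
    {a : X} (ha : a ∈ solSet C f) :
    ((0 : WeakDual ℝ X), (-1 : ℝ)) ∉
      closure (coneGen (epiFn (conjFn (indicatorE C)) ∪ ⋃ i, epiFn (conjFn (f i)))) := by
  obtain ⟨haC, haf⟩ := ha
  set W : Set (WeakDual ℝ X × ℝ) := {q | q.1 a ≤ q.2} with hWdef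
  have hWcl : IsClosed W :=
    isClosed_le ((WeakDual.eval_continuous a).comp continuous_fst) continuous_snd
  have hWcv : Convex ℝ W := by
    intro q1 h1 q2 h2 kk mm hk hm hkm
    simp only [hWdef, Set.mem_setOf_eq] at h1 h2 ⊢
    have e1 : (kk • q1 + mm • q2).1 a = kk * (q1.1 a) + mm * (q2.1 a) := rfl
    have e2 : (kk • q1 + mm • q2).2 = kk * q1.2 + mm * q2.2 := rfl
    rw [e1, e2]
    have hh1 := mul_le_mul_of_nonneg_left h1 hk
    have hh2 := mul_le_mul_of_nonneg_left h2 hm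
    linarith
  have hsm : ∀ t : ℝ, 0 ≤ t → ∀ q ∈ W, t • q ∈ W := by
    intro t ht q hq
    simp only [hWdef, Set.mem_setOf_eq] at hq ⊢
    have e1 : (t • q).1 a = t * q.1 a := rfl
    have e2 : (t • q).2 = t * q.2 := rfl
    rw [e1, e2]
    exact mul_le_mul_of_nonneg_left hq ht
  have h0 : (0 : WeakDual ℝ X × ℝ) ∈ W := by
    simp only [hWdef, Set.mem_setOf_eq]
    exact le_of_eq rfl
  have hsubC : epiFn (conjFn (indicatorE C)) ⊆ W := by
    rintro ⟨p, r⟩ hpr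
    simp only [epiFn, Set.mem_setOf_eq] at hpr
    have h2 : (p a : EReal) - indicatorE C a ≤ conjFn (indicatorE C) p :=
      le_iSup (fun x => (p x : EReal) - indicatorE C x) a
    rw [show indicatorE C a = ((0 : ℝ) : EReal) from by simp [indicatorE, haC]] at h2
    rw [← EReal.coe_sub, sub_zero] at h2
    exact EReal.coe_le_coe_iff.1 (h2.trans hpr)
  have hsubf : ∀ i, epiFn (conjFn (f i)) ⊆ W := by
    intro i
    rintro ⟨p, r⟩ hpr
    simp only [epiFn, Set.mem_setOf_eq] at hpr
    have hfa := haf i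
    have hne : f i a ≠ ⊤ := fun h => by rw [h] at hfa; exact absurd hfa (by simp)
    obtain ⟨s, hs⟩ : ∃ s : ℝ, f i a = (s : EReal) :=
      ⟨(f i a).toReal, (EReal.coe_toReal hne (hfbot i a)).symm⟩
    have hs0 : s ≤ 0 := by
      rw [hs] at hfa
      exact_mod_cast hfa
    have h2 : ((p a - s : ℝ) : EReal) ≤ conjFn (f i) p := by
      have hsu := le_iSup (fun x => (p x : EReal) - f i x) a
      rwa [hs, ← EReal.coe_sub] at hsu
    have h3 : (p a - s : ℝ) ≤ r := EReal.coe_le_coe_iff.1 (h2.trans hpr)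
    show p a ≤ r
    linarith
  intro hmem
  have hsub : (epiFn (conjFn (indicatorE C)) ∪ ⋃ i, epiFn (conjFn (f i))) ⊆ W :=
    Set.union_subset hsubC (Set.iUnion_subset hsubf)
  have hfin := hWcl.closure_subset_iff.2 (coneGen_subset_of hWcv hsm h0 hsub) hmem
  simp only [hWdef, Set.mem_setOf_eq] at hfin
  rw [show ((0 : WeakDual ℝ X)) a = (0 : ℝ) from rfl] at hfin
  linarith

/-- Corollary 3 (Existence theorem), equivalences (a) ⇔ (c) and (c) ⇔ (b). -/
theorem stmt16 [IsTopologicalAddGroup X] [ContinuousSMul ℝ X] [LocallyConvexSpace ℝ X] [T2Space X] {I : Type*} (C : Set X) (hCne : C.Nonempty) (hCcl : IsClosed C) (hCcv : Convex ℝ C)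
    (f : I → X → EReal) (hf : ∀ i, InGamma (f i)) :
    ((solSet C f).Nonempty ↔
        ((0 : WeakDual ℝ X), (-1 : ℝ)) ∉
          closure (coneGen (epiFn (conjFn (indicatorE C)) ∪ ⋃ i, epiFn (conjFn (f i))))) ∧
      (((0 : WeakDual ℝ X), (-1 : ℝ)) ∉
          closure (coneGen (epiFn (conjFn (indicatorE C)) ∪ ⋃ i, epiFn (conjFn (f i)))) ↔
        ((0 : WeakDual ℝ X), (-1 : ℝ)) ∉
          closure (coneGen ((⋃ i, gphFn (conjFn (f i))) ∪ gphFn (conjFn (indicatorE C))))) := by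
  have hfbot : ∀ i x, f i x ≠ ⊥ := fun i => (hf i).1
  have hG : InGamma (indicatorE C) := indicator_InGamma hCne hCcl hCcv
  have hUsub : ((⋃ i, gphFn (conjFn (f i))) ∪ gphFn (conjFn (indicatorE C))) ⊆
      (epiFn (conjFn (indicatorE C)) ∪ ⋃ i, epiFn (conjFn (f i))) := by
    apply Set.union_subset
    · refine (Set.iUnion_mono fun i => ?_).trans Set.subset_union_right
      exact fun q hq => le_of_eq hq
    · refine Set.Subset.trans ?_ Set.subset_union_left
      exact fun q hq => le_of_eq hq
  have hTS := closure_mono (coneGen_mono hUsub)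
  have dir2 : ((0 : WeakDual ℝ X), (-1 : ℝ)) ∉
      closure (coneGen ((⋃ i, gphFn (conjFn (f i))) ∪ gphFn (conjFn (indicatorE C)))) →
      (solSet C f).Nonempty := by
    intro hz
    obtain ⟨L, hLz, hLle⟩ := cone_separation hz
    have hdec : ∀ q : WeakDual ℝ X × ℝ, L q = L (q.1, 0) + q.2 * L (0, 1) := prod_decomp L
    set mu := L ((0 : WeakDual ℝ X), (1 : ℝ)) with hmudef
    have hL00 : L ((0 : WeakDual ℝ X), (0 : ℝ)) = 0 := by
      rw [show ((0 : WeakDual ℝ X), (0 : ℝ)) = (0 : WeakDual ℝ X × ℝ) from rfl, map_zero]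
    have hmuneg : mu < 0 := by
      have h1 := hdec ((0 : WeakDual ℝ X), (-1 : ℝ))
      rw [hL00] at h1
      have h1' : L ((0 : WeakDual ℝ X), (-1 : ℝ)) = -mu := by rw [h1]; norm_num
      linarith [hLz, h1']
    obtain ⟨a0, ha0⟩ := exists_eval (L.comp (ContinuousLinearMap.inl ℝ (WeakDual ℝ X) ℝ))
    set a := (-mu)⁻¹ • a0 with hadef
    have hmupos : (0 : ℝ) < -mu := by linarith
    have hkey : ∀ (p : WeakDual ℝ X) (r : ℝ),
        (p, r) ∈ ((⋃ i, gphFn (conjFn (f i))) ∪ gphFn (conjFn (indicatorE C))) → p a ≤ r := by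
      intro p r hpr
      have h1 := hLle (p, r) hpr
      rw [hdec (p, r)] at h1
      have h5 : L ((p : WeakDual ℝ X), (0 : ℝ)) = p a0 := ha0 p
      have h1' : p a0 + r * mu ≤ 0 := by
        have h1'' : L ((p, r).1, 0) + (p, r).2 * mu ≤ 0 := h1
        rw [show ((p, r) : WeakDual ℝ X × ℝ).1 = p from rfl,
          show ((p, r) : WeakDual ℝ X × ℝ).2 = r from rfl, h5] at h1''
        exact h1''
      have h3 : p a = (-mu)⁻¹ * (p a0) := by rw [hadef, map_smul, smul_eq_mul]
      have h4 : p a0 ≤ r * (-mu) := by linarith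
      calc p a = (-mu)⁻¹ * p a0 := h3
        _ ≤ (-mu)⁻¹ * (r * (-mu)) := mul_le_mul_of_nonneg_left h4 (inv_pos.2 hmupos).le
        _ = r := by rw [mul_comm r (-mu), ← mul_assoc, inv_mul_cancel₀ hmupos.ne', one_mul]
    refine ⟨a, ?_, fun i => ?_⟩
    · have h := key_FM hG a (fun p r hpr => hkey p r (Set.mem_union_right _ hpr))
      by_contra hac
      rw [show indicatorE C a = ⊤ from if_neg hac] at h
      exact absurd h (by simp)
    · exact key_FM (hf i) a
        (fun p r hpr => hkey p r (Set.mem_union_left _ (Set.mem_iUnion.2 ⟨i, hpr⟩)))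
  have dir1 : (solSet C f).Nonempty →
      ((0 : WeakDual ℝ X), (-1 : ℝ)) ∉
        closure (coneGen (epiFn (conjFn (indicatorE C)) ∪ ⋃ i, epiFn (conjFn (f i)))) := by
    rintro ⟨a, ha⟩
    exact easy_dir C f hfbot ha
  exact ⟨⟨dir1, fun h => dir2 fun hm => h (hTS hm)⟩,
    ⟨fun h hm => h (hTS hm), fun h => dir1 (dir2 h)⟩⟩
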